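/- Let A ∈ ℂ^{m×m}, B ∈ ℂ^{n×n}, and X ∈ ℂ^{m×n} be matrices with rank(AX − XB) = ν, and let k ≥ 0 be an integer. Then for any polynomials p and q of degree at most k, rank( p(A) X q(B) − q(A) X p(B) ) ≤ ν k. -/

import Mathlib

open scoped BigOperators Matrix

/-- The `j`-th singular value (1-indexed) of a complex matrix: the `j`-th largest
nonnegative square root of the eigenvalues of `Xᴴ * X`. Junk value `0` out of range. -/
noncomputable def singularValue {m n : ℕ} (X : Matrix (Fin m) (Fin n) ℂ) (j : ℕ) : ℝ :=
  if h : j - 1 < n then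
    Real.sqrt ((Matrix.isHermitian_conjTranspose_mul_self X).eigenvalues
      (Tuple.sort (Matrix.isHermitian_conjTranspose_mul_self X).eigenvalues (Fin.rev ⟨j - 1, h⟩)))
  else 0

/-- The Zolotarev number `Z_k(E, F)`. -/
noncomputable def zolotarev (k : ℕ) (E F : Set ℂ) : ℝ :=
  sInf { t : ℝ | ∃ p q : Polynomial ℂ, p.natDegree ≤ k ∧ q.natDegree ≤ k ∧ q ≠ 0 ∧
    t = sSup ((fun z => ‖p.eval z / q.eval z‖) '' E) /
        sInf ((fun z => ‖p.eval z / q.eval z‖) '' F) }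

/-- A real interval `[a, b]` viewed as a subset of the complex plane. -/
def realSeg (a b : ℝ) : Set ℂ := (fun x : ℝ => (x : ℂ)) '' Set.Icc a b

/-- The complete elliptic integral of the first kind. -/
noncomputable def ellipticK (l : ℝ) : ℝ :=
  ∫ t in (0:ℝ)..1, 1 / Real.sqrt ((1 - t ^ 2) * (1 - l ^ 2 * t ^ 2))

/-- The Grötzsch ring function `μ`. -/
noncomputable def grotzsch (l : ℝ) : ℝ :=
  Real.pi / 2 * ellipticK (Real.sqrt (1 - l ^ 2)) / ellipticK l

/-- The `ε`-rank of a matrix: the least `k` with `σ_{k+1}(X) ≤ ε ‖X‖₂ = ε σ_1(X)`. -/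
noncomputable def epsRank {m n : ℕ} (X : Matrix (Fin m) (Fin n) ℂ) (ε : ℝ) : ℕ :=
  sInf { k : ℕ | singularValue X (k + 1) ≤ ε * singularValue X 1 }

section Aux

variable {m n : ℕ} (A : Matrix (Fin m) (Fin m) ℂ) (B : Matrix (Fin n) (Fin n) ℂ)
  (X : Matrix (Fin m) (Fin n) ℂ)

lemma my_rank_add_le (M N : Matrix (Fin m) (Fin n) ℂ) :
    (M + N).rank ≤ M.rank + N.rank := by
  unfold Matrix.rank
  have h : LinearMap.range (M + N).mulVecLin ≤
      LinearMap.range M.mulVecLin ⊔ LinearMap.range N.mulVecLin := by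
    rintro x ⟨v, rfl⟩
    rw [Matrix.mulVecLin_add]
    exact Submodule.add_mem_sup ⟨v, rfl⟩ ⟨v, rfl⟩
  exact (Submodule.finrank_mono h).trans
    (Submodule.finrank_add_le_finrank_add_finrank _ _)

/-- `MRep s M` : `M = ∑_{i<s} A^i * C * D i` for some `D`, where `C = A*X - X*B`. -/
def MRep (s : ℕ) (M : Matrix (Fin m) (Fin n) ℂ) : Prop :=
  ∃ D : ℕ → Matrix (Fin n) (Fin n) ℂ,
    M = ∑ i ∈ Finset.range s, A ^ i * (A * X - X * B) * D i

variable {A B X}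

lemma rep_zero (s : ℕ) : MRep A B X s 0 :=
  ⟨0, by simp⟩

lemma rep_add {s M N} (hM : MRep A B X s M) (hN : MRep A B X s N) :
    MRep A B X s (M + N) := by
  obtain ⟨D, rfl⟩ := hM; obtain ⟨E, rfl⟩ := hN
  refine ⟨D + E, ?_⟩
  rw [← Finset.sum_add_distrib]
  exact Finset.sum_congr rfl fun i _ => by rw [Pi.add_apply, Matrix.mul_add]

lemma rep_smul {s M} (c : ℂ) (hM : MRep A B X s M) : MRep A B X s (c • M) := by
  obtain ⟨D, rfl⟩ := hM
  exact ⟨c • D, by simp [Finset.smul_sum, Matrix.mul_smul]⟩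

lemma rep_neg {s M} (hM : MRep A B X s M) : MRep A B X s (-M) := by
  have := rep_smul (-1 : ℂ) hM; simpa using this

lemma rep_mono {s M} (hM : MRep A B X s M) : MRep A B X (s + 1) M := by
  obtain ⟨D, rfl⟩ := hM
  refine ⟨fun i => if i < s then D i else 0, ?_⟩
  rw [Finset.sum_range_succ]
  simp only [lt_irrefl, if_neg, Matrix.mul_zero, add_zero, if_false]
  refine (Finset.sum_congr rfl fun i hi => ?_).symm
  rw [if_pos (Finset.mem_range.mp hi)]

lemma rep_mulB {s M} (hM : MRep A B X s M) : MRep A B X s (M * B) := by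
  obtain ⟨D, rfl⟩ := hM
  refine ⟨fun i => D i * B, ?_⟩
  rw [Matrix.sum_mul]
  exact Finset.sum_congr rfl fun i _ => by rw [Matrix.mul_assoc]

lemma rep_shift {s M} (hM : MRep A B X s M) : MRep A B X (s + 1) (A * M * B) := by
  obtain ⟨D, rfl⟩ := hM
  refine ⟨fun i => if i = 0 then 0 else D (i - 1) * B, ?_⟩
  rw [Finset.sum_range_succ']
  simp only [Nat.add_sub_cancel, if_neg (Nat.succ_ne_zero _)]
  rw [Matrix.mul_sum, Matrix.sum_mul]
  simp only [if_true, ite_true, Matrix.mul_zero, add_zero, reduceIte]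
  refine Finset.sum_congr rfl fun i hi => ?_
  simp only [pow_succ' A, Matrix.mul_assoc]

lemma rep_gen {s a : ℕ} (ha : a < s) : MRep A B X s (A ^ a * (A * X - X * B)) := by
  refine ⟨fun i => if i = a then 1 else 0, ?_⟩
  rw [Finset.sum_eq_single a]
  · simp
  · intro b _ hb; simp [hb]
  · intro h; exact absurd (Finset.mem_range.mpr ha) h

lemma rep_sum {s : ℕ} {ι : Type*} (t : Finset ι) (f : ι → Matrix (Fin m) (Fin n) ℂ)
    (h : ∀ x ∈ t, MRep A B X s (f x)) : MRep A B X s (∑ x ∈ t, f x) := by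
  classical
  induction t using Finset.induction_on with
  | empty => simpa using rep_zero s
  | insert _ _ hx ih =>
      rw [Finset.sum_insert hx]
      exact rep_add (h _ (Finset.mem_insert_self _ _))
        (ih fun x hxt => h x (Finset.mem_insert_of_mem hxt))

lemma rep_comm {s : ℕ} : ∀ a ≤ s, MRep A B X s (A ^ a * X - X * B ^ a) := by
  intro a
  induction a with
  | zero => intro _; simpa using rep_zero s
  | succ a ih =>
      intro ha
      have h1 : MRep A B X s ((A ^ a * X - X * B ^ a) * B) :=
        rep_mulB (ih (Nat.le_of_succ_le ha))
      have h2 : MRep A B X s (A ^ a * (A * X - X * B)) := rep_gen ha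
      have h3 := rep_add h1 h2
      have heq : (A ^ a * X - X * B ^ a) * B + A ^ a * (A * X - X * B)
          = A ^ (a + 1) * X - X * B ^ (a + 1) := by
        simp only [Matrix.sub_mul, Matrix.mul_sub, Matrix.mul_assoc, pow_succ]
        abel
      rwa [heq] at h3

lemma rep_pairs : ∀ s a b : ℕ, a ≤ s → b ≤ s →
    MRep A B X s (A ^ a * X * B ^ b - A ^ b * X * B ^ a) := by
  intro s
  induction s with
  | zero =>
      intro a b ha hb
      interval_cases a; interval_cases b
      simpa using rep_zero 0
  | succ s ih =>
      intro a b ha hb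
      match a, b with
      | 0, b =>
          have h := rep_neg (rep_comm (A := A) (B := B) (X := X) (s := s + 1) b hb)
          have heq : -(A ^ b * X - X * B ^ b) = A ^ 0 * X * B ^ b - A ^ b * X * B ^ 0 := by
            simp
          rwa [heq] at h
      | a + 1, 0 =>
          have h := rep_comm (A := A) (B := B) (X := X) (s := s + 1) (a + 1) ha
          have heq : A ^ (a+1) * X - X * B ^ (a+1)
              = A ^ (a+1) * X * B ^ 0 - A ^ 0 * X * B ^ (a+1) := by simp
          rwa [heq] at h
      | a + 1, b + 1 =>
          have h := rep_shift (ih a b (Nat.succ_le_succ_iff.mp ha)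
            (Nat.succ_le_succ_iff.mp hb))
          have heq : A * (A ^ a * X * B ^ b - A ^ b * X * B ^ a) * B
              = A ^ (a + 1) * X * B ^ (b + 1) - A ^ (b + 1) * X * B ^ (a + 1) := by
            simp only [Matrix.mul_sub, Matrix.sub_mul, Matrix.mul_assoc,
              pow_succ' A, pow_succ B]
          rwa [heq] at h

lemma rep_rank_le {ν k : ℕ} (hν : (A * X - X * B).rank = ν) {M}
    (hM : MRep A B X k M) : M.rank ≤ ν * k := by
  obtain ⟨D, rfl⟩ := hM
  calc (∑ i ∈ Finset.range k, A ^ i * (A * X - X * B) * D i).rank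
      ≤ ∑ i ∈ Finset.range k, (A ^ i * (A * X - X * B) * D i).rank := by
        classical
        induction (Finset.range k) using Finset.induction_on with
        | empty => simp
        | insert _ _ hx ih =>
            rw [Finset.sum_insert hx, Finset.sum_insert hx]
            exact (my_rank_add_le _ _).trans (Nat.add_le_add_left ih _)
    _ ≤ ∑ _i ∈ Finset.range k, ν := by
        refine Finset.sum_le_sum fun i _ => ?_
        calc (A ^ i * (A * X - X * B) * D i).rank
            ≤ (A * X - X * B).rank := by
              rw [Matrix.mul_assoc]
              exact (Matrix.rank_mul_le_right _ _).trans (Matrix.rank_mul_le_left _ _)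
          _ = ν := hν
    _ = ν * k := by simp [mul_comm]

end Aux

/-- If `rank(AX - XB) = ν` and `p, q` are polynomials of degree at most `k`,
then `rank(p(A) X q(B) - q(A) X p(B)) ≤ ν k`. -/
theorem rank_aeval_mul_sub_le
    {m n : ℕ} (A : Matrix (Fin m) (Fin m) ℂ) (B : Matrix (Fin n) (Fin n) ℂ)
    (X : Matrix (Fin m) (Fin n) ℂ) (ν k : ℕ)
    (hν : (A * X - X * B).rank = ν)
    (p q : Polynomial ℂ) (hp : p.natDegree ≤ k) (hq : q.natDegree ≤ k) :
    ((Polynomial.aeval A) p * X * (Polynomial.aeval B) q -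
      (Polynomial.aeval A) q * X * (Polynomial.aeval B) p).rank ≤ ν * k := by
  have expand : ∀ r s : Polynomial ℂ, r.natDegree ≤ k → s.natDegree ≤ k →
      (Polynomial.aeval A) r * X * (Polynomial.aeval B) s
      = ∑ a ∈ Finset.range (k + 1), ∑ b ∈ Finset.range (k + 1),
          (r.coeff a * s.coeff b) • (A ^ a * X * B ^ b) := by
    intro r s hr hs
    rw [Polynomial.aeval_eq_sum_range' (Nat.lt_succ_of_le hr),
        Polynomial.aeval_eq_sum_range' (Nat.lt_succ_of_le hs)]
    rw [Matrix.sum_mul, Matrix.sum_mul]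
    refine Finset.sum_congr rfl fun a _ => ?_
    rw [Matrix.mul_sum]
    refine Finset.sum_congr rfl fun b _ => ?_
    rw [Matrix.smul_mul, Matrix.smul_mul, Matrix.mul_smul, smul_smul]
  have key : (Polynomial.aeval A) p * X * (Polynomial.aeval B) q -
      (Polynomial.aeval A) q * X * (Polynomial.aeval B) p
      = ∑ a ∈ Finset.range (k + 1), ∑ b ∈ Finset.range (k + 1),
        (p.coeff a * q.coeff b) • (A ^ a * X * B ^ b - A ^ b * X * B ^ a) := by
    rw [expand p q hp hq, expand q p hq hp]
    simp only [smul_sub, Finset.sum_sub_distrib]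
    congr 1
    rw [Finset.sum_comm]
    refine Finset.sum_congr rfl fun a _ => Finset.sum_congr rfl fun b _ => ?_
    rw [mul_comm]
  rw [key]
  refine rep_rank_le hν ?_
  refine rep_sum _ _ fun a ha => rep_sum _ _ fun b hb => rep_smul _ ?_
  exact rep_pairs k a b (Nat.lt_succ_iff.mp (Finset.mem_range.mp ha))
    (Nat.lt_succ_iff.mp (Finset.mem_range.mp hb))
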